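/- With C_V defined as the capacity C_V(E) = sup{ μ(E) : μ ∈ M₊^V(E), ‖μ‖_{M^V} ≤ 1 }, one has for every Borel set E ⊆ ℝⁿ the upper bound C_V(E) ≤ sup_{y ∈ E} ( ∫∫_{Q_T} H(x-y,t) V(x,t) dx dt )^{-1}, with equality when E is compact. -/

import Mathlib

open MeasureTheory Filter Set
open scoped ENNReal

/-- The Gaussian heat kernel on ℝⁿ. -/
noncomputable def heatKernel (n : ℕ) (x : EuclideanSpace ℝ (Fin n)) (t : ℝ) : ℝ :=
  (4 * Real.pi * t) ^ (-(n : ℝ) / 2) * Real.exp (-‖x‖ ^ 2 / (4 * t))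

/-- The norm `‖μ‖_{M^V} = ∫∫_{Q_T} (∫ H(x-y,t) dμ(y)) V(x,t) dx dt`. -/
noncomputable def Vnorm (n : ℕ) (T : ℝ) (V : EuclideanSpace ℝ (Fin n) → ℝ → ℝ)
    (μ : Measure (EuclideanSpace ℝ (Fin n))) : ℝ≥0∞ :=
  ∫⁻ x, ∫⁻ t in Set.Ioo (0 : ℝ) T,
    (∫⁻ y, ENNReal.ofReal (heatKernel n (x - y) t) ∂μ) * ENNReal.ofReal (V x t)

/-- The capacity `C_V(E)`, defined as the supremum of `μ(E)` over positive measures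
concentrated on `E` with `‖μ‖_{M^V} ≤ 1`. -/
noncomputable def capV (n : ℕ) (T : ℝ) (V : EuclideanSpace ℝ (Fin n) → ℝ → ℝ)
    (E : Set (EuclideanSpace ℝ (Fin n))) : ℝ≥0∞ :=
  sSup {r : ℝ≥0∞ | ∃ μ : Measure (EuclideanSpace ℝ (Fin n)),
    μ Eᶜ = 0 ∧ Vnorm n T V μ ≤ 1 ∧ r = μ E}

lemma heatKernel_pos (n : ℕ) (z : EuclideanSpace ℝ (Fin n)) {t : ℝ} (ht : 0 < t) :
    0 < heatKernel n z t :=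
  mul_pos (Real.rpow_pos_of_pos (by positivity) _) (Real.exp_pos _)

lemma measurable_heatKernel (n : ℕ) :
    Measurable fun q : EuclideanSpace ℝ (Fin n) × ℝ => heatKernel n q.1 q.2 := by
  have mA : Measurable fun t : ℝ => (4 * Real.pi * t) ^ (-(n : ℝ) / 2) := by
    apply measurable_of_continuousOn_compl_singleton (0 : ℝ)
    intro t ht
    have h4 : (4 : ℝ) * Real.pi * t ≠ 0 := by
      have : t ≠ 0 := ht
      have hpi := Real.pi_pos
      positivity
    exact ((Real.continuousAt_rpow_const _ _ (Or.inl h4)).comp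
      ((continuous_const.mul continuous_id).continuousAt)).continuousWithinAt
  have mB : Measurable fun q : EuclideanSpace ℝ (Fin n) × ℝ =>
      Real.exp (-‖q.1‖ ^ 2 / (4 * q.2)) := by
    apply Real.measurable_exp.comp
    exact Measurable.div (Continuous.measurable (by continuity))
      (measurable_snd.const_mul 4)
  exact (mA.comp measurable_snd).mul mB

attribute [irreducible] heatKernel

set_option maxHeartbeats 1000000

theorem capV_le_sup_inv (n : ℕ) (T : ℝ) (hT : 0 < T)
    (V : EuclideanSpace ℝ (Fin n) → ℝ → ℝ) (hV : ∀ x t, 0 ≤ V x t)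
    (hVm : Measurable (fun p : EuclideanSpace ℝ (Fin n) × ℝ => V p.1 p.2))
    (E : Set (EuclideanSpace ℝ (Fin n))) (hE : MeasurableSet E) :
    capV n T V E ≤ (⨆ y ∈ E, (∫⁻ x, ∫⁻ t in Set.Ioo (0 : ℝ) T,
        ENNReal.ofReal (heatKernel n (x - y) t * V x t))⁻¹) ∧
    (IsCompact E → capV n T V E = ⨆ y ∈ E, (∫⁻ x, ∫⁻ t in Set.Ioo (0 : ℝ) T,
        ENNReal.ofReal (heatKernel n (x - y) t * V x t))⁻¹) := by
  classical
  set W : EuclideanSpace ℝ (Fin n) → ℝ≥0∞ := fun y => ∫⁻ x, ∫⁻ t in Set.Ioo (0 : ℝ) T,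
      ENNReal.ofReal (heatKernel n (x - y) t * V x t) with hW
  -- positivity of the heat kernel for positive times
  have hKpos : ∀ (z : EuclideanSpace ℝ (Fin n)) (t : ℝ), 0 < t → 0 < heatKernel n z t :=
    fun z t ht => heatKernel_pos n z ht
  have mK : Measurable fun q : EuclideanSpace ℝ (Fin n) × ℝ => heatKernel n q.1 q.2 :=
    measurable_heatKernel n
  have mHxy : Measurable fun p : (EuclideanSpace ℝ (Fin n) × ℝ) × EuclideanSpace ℝ (Fin n) =>
      heatKernel n (p.1.1 - p.2) p.1.2 := by
    exact mK.comp ((measurable_fst.fst.sub measurable_snd).prodMk measurable_fst.snd)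
  have mHof : Measurable fun p : (EuclideanSpace ℝ (Fin n) × ℝ) × EuclideanSpace ℝ (Fin n) =>
      ENNReal.ofReal (heatKernel n (p.1.1 - p.2) p.1.2) :=
    ENNReal.measurable_ofReal.comp mHxy
  have mCore : Measurable fun p : (EuclideanSpace ℝ (Fin n) × ℝ) × EuclideanSpace ℝ (Fin n) =>
      ENNReal.ofReal (heatKernel n (p.1.1 - p.2) p.1.2) * ENNReal.ofReal (V p.1.1 p.1.2) := by
    exact mHof.mul ((ENNReal.measurable_ofReal.comp hVm).comp measurable_fst)
  have mCore' : Measurable fun p : (EuclideanSpace ℝ (Fin n) × ℝ) × EuclideanSpace ℝ (Fin n) =>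
      ENNReal.ofReal (heatKernel n (p.1.1 - p.2) p.1.2 * V p.1.1 p.1.2) := by
    exact ENNReal.measurable_ofReal.comp (mHxy.mul (hVm.comp measurable_fst))
  have mq2 : Measurable fun q : (EuclideanSpace ℝ (Fin n) × EuclideanSpace ℝ (Fin n)) × ℝ =>
      ENNReal.ofReal (heatKernel n (q.1.1 - q.1.2) q.2) * ENNReal.ofReal (V q.1.1 q.2) := by
    exact mCore.comp ((measurable_fst.fst.prodMk measurable_snd).prodMk measurable_fst.snd)
  have mq2' : Measurable fun q : (EuclideanSpace ℝ (Fin n) × EuclideanSpace ℝ (Fin n)) × ℝ =>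
      ENNReal.ofReal (heatKernel n (q.1.1 - q.1.2) q.2 * V q.1.1 q.2) := by
    exact mCore'.comp ((measurable_fst.fst.prodMk measurable_snd).prodMk measurable_fst.snd)
  have mInt2 : Measurable fun p : EuclideanSpace ℝ (Fin n) × EuclideanSpace ℝ (Fin n) =>
      ∫⁻ t in Set.Ioo (0 : ℝ) T,
        ENNReal.ofReal (heatKernel n (p.1 - p.2) t) * ENNReal.ofReal (V p.1 t) := by
    exact Measurable.lintegral_prod_right' (ν := volume.restrict (Set.Ioo (0 : ℝ) T)) mq2
  have mInt2' : Measurable fun p : EuclideanSpace ℝ (Fin n) × EuclideanSpace ℝ (Fin n) =>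
      ∫⁻ t in Set.Ioo (0 : ℝ) T,
        ENNReal.ofReal (heatKernel n (p.1 - p.2) t * V p.1 t) := by
    exact Measurable.lintegral_prod_right' (ν := volume.restrict (Set.Ioo (0 : ℝ) T)) mq2'
  have mW : Measurable W := by
    have h := Measurable.lintegral_prod_left' (μ := volume) mInt2'
    exact h
  -- pointwise measurability helpers
  have mdir : ∀ (x : EuclideanSpace ℝ (Fin n)) (t : ℝ),
      Measurable fun z : EuclideanSpace ℝ (Fin n) =>
        ENNReal.ofReal (heatKernel n (x - z) t) := fun x t => by
    exact mHof.comp (show Measurable fun z : EuclideanSpace ℝ (Fin n) =>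
      ((((x, t), z)) : (EuclideanSpace ℝ (Fin n) × ℝ) × EuclideanSpace ℝ (Fin n)) from
      measurable_const.prodMk measurable_id)
  have mtfun : ∀ (x y : EuclideanSpace ℝ (Fin n)),
      Measurable fun t : ℝ =>
        ENNReal.ofReal (heatKernel n (x - y) t) * ENNReal.ofReal (V x t) := fun x y => by
    exact mCore.comp (show Measurable fun t : ℝ =>
      ((((x, t), y)) : (EuclideanSpace ℝ (Fin n) × ℝ) × EuclideanSpace ℝ (Fin n)) from
      (measurable_const.prodMk measurable_id).prodMk measurable_const)
  have mxfun : ∀ y : EuclideanSpace ℝ (Fin n),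
      Measurable fun x : EuclideanSpace ℝ (Fin n) => ∫⁻ t in Set.Ioo (0 : ℝ) T,
        ENNReal.ofReal (heatKernel n (x - y) t) * ENNReal.ofReal (V x t) := fun y => by
    exact mInt2.comp (show Measurable fun x : EuclideanSpace ℝ (Fin n) =>
      (((x, y)) : EuclideanSpace ℝ (Fin n) × EuclideanSpace ℝ (Fin n)) from
      measurable_id.prodMk measurable_const)
  have mswap1 : ∀ x : EuclideanSpace ℝ (Fin n),
      Measurable fun q : ℝ × EuclideanSpace ℝ (Fin n) =>
        ENNReal.ofReal (heatKernel n (x - q.2) q.1) * ENNReal.ofReal (V x q.1) := fun x => by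
    exact mCore.comp (show Measurable fun q : ℝ × EuclideanSpace ℝ (Fin n) =>
      ((((x, q.1), q.2)) : (EuclideanSpace ℝ (Fin n) × ℝ) × EuclideanSpace ℝ (Fin n)) from
      (measurable_const.prodMk measurable_fst).prodMk measurable_snd)
  -- rewriting the double integral using `ofReal_mul`
  have hcongr : ∀ y : EuclideanSpace ℝ (Fin n), (∫⁻ x, ∫⁻ t in Set.Ioo (0 : ℝ) T,
      ENNReal.ofReal (heatKernel n (x - y) t) * ENNReal.ofReal (V x t)) = W y := by
    intro y
    refine lintegral_congr fun x => setLIntegral_congr_fun measurableSet_Ioo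
      (fun t ht => ?_)
    exact (ENNReal.ofReal_mul (hKpos _ _ ht.1).le).symm
  -- computation of the norm of a scaled Dirac mass
  have hVnormSmul : ∀ (y : EuclideanSpace ℝ (Fin n)) (c : ℝ≥0∞),
      Vnorm n T V (c • Measure.dirac y) = c * W y := by
    intro y c
    have step1 : Vnorm n T V (c • Measure.dirac y) = ∫⁻ x, ∫⁻ t in Set.Ioo (0 : ℝ) T,
        c * (ENNReal.ofReal (heatKernel n (x - y) t) * ENNReal.ofReal (V x t)) := by
      simp only [Vnorm]
      refine lintegral_congr fun x => lintegral_congr fun t => ?_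
      rw [lintegral_smul_measure, lintegral_dirac' y (mdir x t), smul_eq_mul, mul_assoc]
    rw [step1]
    calc (∫⁻ x, ∫⁻ t in Set.Ioo (0 : ℝ) T,
        c * (ENNReal.ofReal (heatKernel n (x - y) t) * ENNReal.ofReal (V x t)))
        = ∫⁻ x, c * ∫⁻ t in Set.Ioo (0 : ℝ) T,
          ENNReal.ofReal (heatKernel n (x - y) t) * ENNReal.ofReal (V x t) :=
        lintegral_congr fun x => lintegral_const_mul c (mtfun x y)
      _ = c * ∫⁻ x, ∫⁻ t in Set.Ioo (0 : ℝ) T,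
          ENNReal.ofReal (heatKernel n (x - y) t) * ENNReal.ofReal (V x t) :=
        lintegral_const_mul c (mxfun y)
      _ = c * W y := by rw [hcongr y]
  -- lower bound : each `(W y)⁻¹` is attained by a scaled Dirac mass
  have hge : ∀ y ∈ E, (W y)⁻¹ ≤ capV n T V E := by
    intro y hy
    unfold capV
    apply le_sSup
    refine ⟨(W y)⁻¹ • Measure.dirac y, ?_, ?_, ?_⟩
    · simp [Measure.smul_apply, Measure.dirac_apply' _ hE.compl,
        Set.indicator_of_notMem (show y ∉ Eᶜ from fun h => h hy)]
    · rw [hVnormSmul]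
      rcases eq_or_ne (W y) 0 with h | h
      · simp [h]
      · rcases eq_or_ne (W y) ∞ with h' | h'
        · simp [h']
        · rw [ENNReal.inv_mul_cancel h h']
    · simp [Measure.smul_apply, Measure.dirac_apply' _ hE, Set.indicator_of_mem hy]
  -- upper bound
  have hle : capV n T V E ≤ ⨆ y ∈ E, (W y)⁻¹ := by
    unfold capV
    apply sSup_le
    rintro r ⟨μ, hμc, hμn, rfl⟩
    rcases eq_empty_or_nonempty E with rfl | ⟨y₀, hy₀⟩
    · simp
    by_cases hσ : SigmaFinite μ
    · haveI := hσ
      -- Tonelli : the norm equals `∫ W dμ`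
      have hswap : Vnorm n T V μ = ∫⁻ y, W y ∂μ := by
        calc Vnorm n T V μ
            = ∫⁻ x, ∫⁻ t in Set.Ioo (0 : ℝ) T, ∫⁻ y,
              ENNReal.ofReal (heatKernel n (x - y) t) * ENNReal.ofReal (V x t) ∂μ := by
              simp only [Vnorm]
              exact lintegral_congr fun x => lintegral_congr fun t =>
                (lintegral_mul_const' _ _ ENNReal.ofReal_ne_top).symm
          _ = ∫⁻ x, ∫⁻ y, (∫⁻ t in Set.Ioo (0 : ℝ) T,
              ENNReal.ofReal (heatKernel n (x - y) t) * ENNReal.ofReal (V x t)) ∂μ := by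
              refine lintegral_congr fun x => lintegral_lintegral_swap ?_
              exact (mswap1 x).aemeasurable
          _ = ∫⁻ y, (∫⁻ x, ∫⁻ t in Set.Ioo (0 : ℝ) T,
              ENNReal.ofReal (heatKernel n (x - y) t) * ENNReal.ofReal (V x t)) ∂μ := by
              exact lintegral_lintegral_swap mInt2.aemeasurable
          _ = ∫⁻ y, W y ∂μ := lintegral_congr fun y => hcongr y
      have hm : μ E * ⨅ y ∈ E, W y ≤ 1 := by
        calc μ E * ⨅ y ∈ E, W y = ∫⁻ _ in E, (⨅ y ∈ E, W y) ∂μ := by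
              rw [setLIntegral_const, mul_comm]
          _ ≤ ∫⁻ y in E, W y ∂μ := setLIntegral_mono mW fun y hy => biInf_le W hy
          _ ≤ ∫⁻ y, W y ∂μ := setLIntegral_le_lintegral _ _
          _ = Vnorm n T V μ := hswap.symm
          _ ≤ 1 := hμn
      calc μ E ≤ (⨅ y ∈ E, W y)⁻¹ := ENNReal.le_inv_iff_mul_le.mpr hm
        _ = ⨆ y ∈ E, (W y)⁻¹ := by simp only [ENNReal.inv_iInf]
    · -- non σ-finite case : the inner integral is infinite everywhere
      have hinf : ∀ (x : EuclideanSpace ℝ (Fin n)) (t : ℝ), t ∈ Set.Ioo (0 : ℝ) T →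
          (∫⁻ z, ENNReal.ofReal (heatKernel n (x - z) t) ∂μ) = ∞ := by
        intro x t ht
        by_contra hfin
        apply hσ
        refine ⟨⟨⟨fun k => {z | ((k : ℝ≥0∞))⁻¹ ≤ ENNReal.ofReal (heatKernel n (x - z) t)},
          fun _ => trivial, fun k => ?_, ?_⟩⟩⟩
        · have h1 := mul_meas_ge_le_lintegral₀ (μ := μ) (mdir x t).aemeasurable
            ((k : ℝ≥0∞))⁻¹
          rw [lt_top_iff_ne_top]
          intro h2
          rw [h2, ENNReal.mul_top (by simp : ((k : ℝ≥0∞))⁻¹ ≠ 0)] at h1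
          exact hfin (top_le_iff.mp h1)
        · ext z
          simp only [Set.mem_iUnion, Set.mem_univ, iff_true, Set.mem_setOf_eq]
          have hz : ENNReal.ofReal (heatKernel n (x - z) t) ≠ 0 :=
            (ENNReal.ofReal_pos.mpr (hKpos _ _ ht.1)).ne'
          obtain ⟨k, hk⟩ := ENNReal.exists_inv_nat_lt hz
          exact ⟨k, hk.le⟩
      have hVtop : Vnorm n T V μ = ∫⁻ x, ∫⁻ t in Set.Ioo (0 : ℝ) T,
          ⊤ * ENNReal.ofReal (V x t) := by
        simp only [Vnorm]
        exact lintegral_congr fun x => setLIntegral_congr_fun measurableSet_Ioo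
          (fun t ht => by rw [hinf x t ht])
      set K : ℝ≥0∞ := ∫⁻ x, ∫⁻ t in Set.Ioo (0 : ℝ) T, ⊤ * ENNReal.ofReal (V x t) with hKdef
      have hK1 : K ≤ 1 := by rw [← hVtop]; exact hμn
      have h2K : (2 : ℝ≥0∞) * K = K := by
        calc (2 : ℝ≥0∞) * K
            = ∫⁻ x, 2 * ∫⁻ t in Set.Ioo (0 : ℝ) T, ⊤ * ENNReal.ofReal (V x t) :=
            (lintegral_const_mul' _ _ (by norm_num)).symm
          _ = ∫⁻ x, ∫⁻ t in Set.Ioo (0 : ℝ) T, 2 * (⊤ * ENNReal.ofReal (V x t)) :=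
            lintegral_congr fun x => (lintegral_const_mul' _ _ (by norm_num)).symm
          _ = K := by
            refine lintegral_congr fun x => lintegral_congr fun t => ?_
            rcases eq_or_ne (ENNReal.ofReal (V x t)) 0 with h | h
            · simp [h]
            · rw [ENNReal.top_mul h, ENNReal.mul_top (by norm_num : (2 : ℝ≥0∞) ≠ 0)]
      have hK0 : K = 0 := by
        by_contra hK0
        have hKtop : K ≠ ∞ := (lt_of_le_of_lt hK1 ENNReal.one_lt_top).ne
        have h21 : (2 : ℝ≥0∞) * K = 1 * K := by rw [one_mul]; exact h2K
        have := (ENNReal.mul_left_inj hK0 hKtop).mp h21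
        norm_num at this
      have hWzero : W y₀ = 0 := by
        refine le_antisymm ?_ zero_le
        rw [← hK0]
        refine lintegral_mono fun x => lintegral_mono fun t => ?_
        rcases eq_or_ne (V x t) 0 with h | h
        · simp [h]
        · have hvne : ENNReal.ofReal (V x t) ≠ 0 :=
            (ENNReal.ofReal_pos.mpr (lt_of_le_of_ne (hV x t) (Ne.symm h))).ne'
          rw [ENNReal.top_mul hvne]
          exact le_top
      calc μ E ≤ ⊤ := le_top
        _ = (W y₀)⁻¹ := by rw [hWzero, ENNReal.inv_zero]
        _ ≤ ⨆ y ∈ E, (W y)⁻¹ := le_iSup₂ (f := fun y (_ : y ∈ E) => (W y)⁻¹) y₀ hy₀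
  have hgesup : (⨆ y ∈ E, (W y)⁻¹) ≤ capV n T V E := iSup₂_le hge
  constructor
  · simpa only [hW] using hle
  · exact fun _ => le_antisymm (by simpa only [hW] using hle)
      (by simpa only [hW] using hgesup)
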